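/- Let A and B be finite types and let ρ be a density matrix on A × B. Then F(ρ,σ) ≤ 1 for every σ ∈ PPT#_2(A:B), and there exists σ ∈ PPT#_2(A:B) with F(ρ,σ) = 1 if and only if ρ^{T_B} is positive semidefinite. (In particular, the hash logarithmic fidelity of binegativity E_{#,2}^{1/2}(ρ) = −log sup_{σ ∈ PPT#_2} F(ρ,σ) is nonnegative and vanishes exactly on PPT states.) -/

import Mathlib

open Matrix
open scoped ComplexOrder

/-- Total positive semidefinite square root: the PSD square root of `M` if `M` is PSD,
and junk value `0` otherwise. -/
noncomputable def msqrt {n : Type*} [Fintype n] [DecidableEq n]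
    (M : Matrix n n ℂ) : Matrix n n ℂ :=
  letI := Classical.dec M.PosSemidef
  if h : M.PosSemidef then
    h.1.eigenvectorUnitary.1 * diagonal ((↑) ∘ Real.sqrt ∘ h.1.eigenvalues) *
      (star h.1.eigenvectorUnitary : Matrix n n ℂ)
  else 0

/-- The trace norm `‖M‖₁ = tr √(Mᴴ M)` of a complex matrix, as a real number. -/
noncomputable def traceNorm {n : Type*} [Fintype n] [DecidableEq n]
    (M : Matrix n n ℂ) : ℝ :=
  (msqrt (Mᴴ * M)).trace.re

/-- The partial transpose over the second party `B`:
`M^{T_B}((a,b),(a',b')) = M((a,b'),(a',b))`. -/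
def ptB {A B : Type*} (M : Matrix (A × B) (A × B) ℂ) : Matrix (A × B) (A × B) ℂ :=
  fun x y => M (x.1, y.2) (y.1, x.2)

/-- The matrix absolute value `|M| = √(Mᴴ M)`. -/
noncomputable def matAbs {n : Type*} [Fintype n] [DecidableEq n]
    (M : Matrix n n ℂ) : Matrix n n ℂ :=
  msqrt (Mᴴ * M)

/-- Uhlmann fidelity `F(ρ,σ) = (tr √(√σ ρ √σ))²` between positive semidefinite matrices. -/
noncomputable def fidelity {n : Type*} [Fintype n] [DecidableEq n]
    (ρ σ : Matrix n n ℂ) : ℝ :=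
  ((msqrt (msqrt σ * ρ * msqrt σ)).trace.re) ^ 2

namespace PPTAux

variable {n : Type*} [Fintype n] [DecidableEq n]

open scoped MatrixOrder in
lemma msqrt_eq {M : Matrix n n ℂ} (h : M.PosSemidef) : msqrt M = CFC.sqrt M := by
  rw [CFC.sqrt_eq_cfc, cfc_nnreal_eq_real _ M h.nonneg, h.1.cfc_eq, IsHermitian.cfc,
    Unitary.conjStarAlgAut_apply]
  simp only [msqrt, dif_pos h]
  congr 2
  refine congrArg diagonal (funext fun i => ?_)
  simp [Real.coe_sqrt, Real.coe_toNNReal', max_eq_left (h.eigenvalues_nonneg i)]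

open scoped MatrixOrder in
lemma msqrt_posSemidef {M : Matrix n n ℂ} (h : M.PosSemidef) : (msqrt M).PosSemidef := by
  rw [msqrt_eq h]; exact Matrix.nonneg_iff_posSemidef.mp (CFC.sqrt_nonneg M)

open scoped MatrixOrder in
lemma msqrt_mul_self {M : Matrix n n ℂ} (h : M.PosSemidef) : msqrt M * msqrt M = M := by
  rw [msqrt_eq h]; exact CFC.sqrt_mul_sqrt_self M h.nonneg

open scoped MatrixOrder in
lemma msqrt_eq_of_sq {B M : Matrix n n ℂ} (hB : B.PosSemidef) (hM : M.PosSemidef)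
    (h : B * B = M) : msqrt M = B := by
  rw [msqrt_eq hM]
  exact CFC.sqrt_unique h hB.nonneg

-- ptB basic lemmas
lemma ptB_ptB {A B : Type*} (M : Matrix (A × B) (A × B) ℂ) : ptB (ptB M) = M := rfl

lemma ptB_trace {A B : Type*} [Fintype A] [Fintype B] (M : Matrix (A × B) (A × B) ℂ) :
    (ptB M).trace = M.trace := rfl

lemma ptB_conjTranspose {A B : Type*} (M : Matrix (A × B) (A × B) ℂ) :
    (ptB M)ᴴ = ptB (Mᴴ) := rfl

lemma ptB_isHermitian {A B : Type*} {M : Matrix (A × B) (A × B) ℂ} (h : M.IsHermitian) :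
    (ptB M).IsHermitian := by
  unfold Matrix.IsHermitian at *
  rw [ptB_conjTranspose, h]



lemma trace_ctm_re (B : Matrix n n ℂ) :
    ((Bᴴ * B).trace).re = ∑ j, ∑ i, Complex.normSq (B i j) := by
  rw [Matrix.trace, Complex.re_sum]
  refine Finset.sum_congr rfl fun j _ => ?_
  rw [Matrix.diag_apply, Matrix.mul_apply, Complex.re_sum]
  refine Finset.sum_congr rfl fun i _ => ?_
  simp only [Matrix.conjTranspose_apply, Complex.normSq_apply, Complex.mul_re,
    RCLike.star_def, Complex.conj_re, Complex.conj_im]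
  ring

lemma psd_trace_re_nonneg {M : Matrix n n ℂ} (h : M.PosSemidef) : 0 ≤ M.trace.re := by
  have hM : M = (msqrt M)ᴴ * msqrt M := by
    rw [(msqrt_posSemidef h).isHermitian.eq, msqrt_mul_self h]
  rw [hM, trace_ctm_re]
  exact Finset.sum_nonneg fun j _ => Finset.sum_nonneg fun i _ => Complex.normSq_nonneg _

lemma psd_eq_zero_of_trace {M : Matrix n n ℂ} (h : M.PosSemidef) (h0 : M.trace.re = 0) :
    M = 0 := by
  have hM : M = (msqrt M)ᴴ * msqrt M := by
    rw [(msqrt_posSemidef h).isHermitian.eq, msqrt_mul_self h]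
  rw [hM, trace_ctm_re] at h0
  have hz : ∀ i j, msqrt M i j = 0 := by
    intro i j
    have h1 : ∀ j ∈ Finset.univ, (0:ℝ) ≤ ∑ i, Complex.normSq (msqrt M i j) := by
      intro j _; exact Finset.sum_nonneg fun i _ => Complex.normSq_nonneg _
    have h2 := (Finset.sum_eq_zero_iff_of_nonneg h1).1 h0 j (Finset.mem_univ j)
    have h3 : ∀ i ∈ Finset.univ, (0:ℝ) ≤ Complex.normSq (msqrt M i j) := by
      intro i _; exact Complex.normSq_nonneg _
    have h4 := (Finset.sum_eq_zero_iff_of_nonneg h3).1 h2 i (Finset.mem_univ i)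
    exact Complex.normSq_eq_zero.mp h4
  have : msqrt M = 0 := by ext i j; exact hz i j
  rw [hM, this, Matrix.conjTranspose_zero, Matrix.zero_mul]

lemma herm_trace_eq_re {M : Matrix n n ℂ} (h : M.IsHermitian) :
    M.trace = (M.trace.re : ℂ) := by
  have := congrArg Matrix.trace h
  rw [Matrix.trace_conjTranspose] at this
  have him : M.trace.im = 0 := by
    have := congrArg Complex.im this
    simp at this
    linarith
  exact Complex.ext (by simp) (by simp [him])

-- unitary conjugation lemmas
lemma unitary_conj_psd (V : Matrix.unitaryGroup n ℂ) {d : n → ℝ} (hd : ∀ i, 0 ≤ d i) :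
    ((V : Matrix n n ℂ) * Matrix.diagonal (fun i => (d i : ℂ)) *
      star (V : Matrix n n ℂ)).PosSemidef := by
  have hD : (Matrix.diagonal (fun i => (d i : ℂ))).PosSemidef :=
    Matrix.PosSemidef.diagonal (fun i => Complex.zero_le_real.2 (hd i))
  have := hD.mul_mul_conjTranspose_same (V : Matrix n n ℂ)
  rwa [Matrix.star_eq_conjTranspose]

lemma unitary_conj_trace (V : Matrix.unitaryGroup n ℂ) (X : Matrix n n ℂ) :
    ((V : Matrix n n ℂ) * X * star (V : Matrix n n ℂ)).trace = X.trace := by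
  rw [Matrix.trace_mul_cycle]
  rw [Matrix.UnitaryGroup.star_mul_self V, Matrix.one_mul]

lemma unitary_conj_mul (V : Matrix.unitaryGroup n ℂ) (d e : n → ℂ) :
    ((V : Matrix n n ℂ) * Matrix.diagonal d * star (V : Matrix n n ℂ)) *
      ((V : Matrix n n ℂ) * Matrix.diagonal e * star (V : Matrix n n ℂ))
    = (V : Matrix n n ℂ) * Matrix.diagonal (fun i => d i * e i) * star (V : Matrix n n ℂ) := by
  have h1 : star (V : Matrix n n ℂ) * (V : Matrix n n ℂ) = 1 :=
    Matrix.UnitaryGroup.star_mul_self V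
  calc (V : Matrix n n ℂ) * Matrix.diagonal d * star (V : Matrix n n ℂ) *
      ((V : Matrix n n ℂ) * Matrix.diagonal e * star (V : Matrix n n ℂ))
      = (V : Matrix n n ℂ) * Matrix.diagonal d *
        ((star (V : Matrix n n ℂ) * (V : Matrix n n ℂ)) *
          (Matrix.diagonal e * star (V : Matrix n n ℂ))) := by
        simp only [Matrix.mul_assoc]
    _ = (V : Matrix n n ℂ) * (Matrix.diagonal d * Matrix.diagonal e) *
        star (V : Matrix n n ℂ) := by rw [h1, Matrix.one_mul]; simp only [Matrix.mul_assoc]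
    _ = _ := by rw [Matrix.diagonal_mul_diagonal]

lemma unitary_conj_inv (V : Matrix.unitaryGroup n ℂ) (D : Matrix n n ℂ) :
    star (V : Matrix n n ℂ) * ((V : Matrix n n ℂ) * D * star (V : Matrix n n ℂ)) *
      (V : Matrix n n ℂ) = D := by
  have h1 : star (V : Matrix n n ℂ) * (V : Matrix n n ℂ) = 1 :=
    Matrix.UnitaryGroup.star_mul_self V
  calc star (V : Matrix n n ℂ) * ((V : Matrix n n ℂ) * D * star (V : Matrix n n ℂ)) *
      (V : Matrix n n ℂ)
      = (star (V : Matrix n n ℂ) * (V : Matrix n n ℂ)) * D *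
        (star (V : Matrix n n ℂ) * (V : Matrix n n ℂ)) := by simp only [Matrix.mul_assoc]
    _ = D := by rw [h1, Matrix.one_mul, Matrix.mul_one]



noncomputable def ev (v : n → ℂ) : EuclideanSpace ℂ n := (WithLp.equiv 2 _).symm v

lemma ev_inner (v w : n → ℂ) : (inner ℂ (ev v) (ev w) : ℂ) = dotProduct (star v) w :=
  dotProduct_comm _ _

lemma ev_self (v : n → ℂ) : dotProduct (star v) v = (‖ev v‖ : ℂ) ^ 2 := by
  rw [← ev_inner, inner_self_eq_norm_sq_to_K]
  rfl

lemma contraction {U : Matrix n n ℂ} (h : (1 - Uᴴ * U).PosSemidef) :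
    (1 - U * Uᴴ).PosSemidef := by
  rw [Matrix.posSemidef_iff_dotProduct_mulVec]
  constructor
  · unfold Matrix.IsHermitian
    rw [Matrix.conjTranspose_sub, Matrix.conjTranspose_one, Matrix.conjTranspose_mul,
      Matrix.conjTranspose_conjTranspose]
  · intro x
    have key : dotProduct (star x) ((1 - U * Uᴴ) *ᵥ x)
        = dotProduct (star x) x
          - dotProduct (star (Uᴴ *ᵥ x)) (Uᴴ *ᵥ x) := by
      rw [Matrix.sub_mulVec, Matrix.one_mulVec, dotProduct_sub]
      congr 1
      simp only [Matrix.star_mulVec, dotProduct_mulVec, Matrix.vecMul_vecMul,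
        Matrix.conjTranspose_conjTranspose]
    have hUy : dotProduct (star (Uᴴ *ᵥ x)) ((1 - Uᴴ * U) *ᵥ (Uᴴ *ᵥ x))
        = dotProduct (star (Uᴴ *ᵥ x)) (Uᴴ *ᵥ x)
          - dotProduct (star (U *ᵥ (Uᴴ *ᵥ x))) (U *ᵥ (Uᴴ *ᵥ x)) := by
      rw [Matrix.sub_mulVec, Matrix.one_mulVec, dotProduct_sub]
      congr 1
      simp only [Matrix.star_mulVec, dotProduct_mulVec, Matrix.vecMul_vecMul,
        Matrix.conjTranspose_conjTranspose]
      congr 2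
      simp only [Matrix.mul_assoc]
    have keyy : dotProduct (star (Uᴴ *ᵥ x)) (Uᴴ *ᵥ x)
        = dotProduct (star x) (U *ᵥ (Uᴴ *ᵥ x)) := by
      simp only [Matrix.star_mulVec, dotProduct_mulVec, Matrix.vecMul_vecMul,
        Matrix.conjTranspose_conjTranspose]
    have ha : (0:ℝ) ≤ ‖ev x‖ := norm_nonneg _
    have hb : (0:ℝ) ≤ ‖ev (Uᴴ *ᵥ x)‖ := norm_nonneg _
    have hc : (0:ℝ) ≤ ‖ev (U *ᵥ (Uᴴ *ᵥ x))‖ := norm_nonneg _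
    set a := ‖ev x‖
    set b := ‖ev (Uᴴ *ᵥ x)‖
    set c := ‖ev (U *ᵥ (Uᴴ *ᵥ x))‖
    have hcb : c ≤ b := by
      have h2 := h.dotProduct_mulVec_nonneg (Uᴴ *ᵥ x)
      rw [hUy, ev_self, ev_self] at h2
      have hr : (0:ℝ) ≤ b^2 - c^2 := by exact_mod_cast h2
      nlinarith
    have hba : b ≤ a := by
      have hCS : ‖(inner ℂ (ev x) (ev (U *ᵥ (Uᴴ *ᵥ x)))  : ℂ)‖ ≤ a * c := norm_inner_le_norm _ _
      have hb2 : (inner ℂ (ev x) (ev (U *ᵥ (Uᴴ *ᵥ x))) : ℂ) = ((b:ℂ))^2 := by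
        rw [ev_inner, ← keyy, ev_self]
      have : b^2 ≤ a * c := by
        calc b^2 = ‖((b:ℂ))^2‖ := by
              rw [norm_pow, Complex.norm_real, Real.norm_eq_abs, abs_of_nonneg hb]
          _ = ‖(inner ℂ (ev x) (ev (U *ᵥ (Uᴴ *ᵥ x))) : ℂ)‖ := by rw [hb2]
          _ ≤ a * c := hCS
      nlinarith
    rw [key, ev_self, ev_self]
    have hr2 : (0:ℝ) ≤ a^2 - b^2 := by nlinarith
    exact_mod_cast hr2

-- Frobenius inner product = trace
noncomputable def toE (X : Matrix n n ℂ) : EuclideanSpace ℂ (n × n) :=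
  (WithLp.equiv 2 _).symm (fun p => X p.1 p.2)

lemma toE_inner (X Y : Matrix n n ℂ) :
    (inner ℂ (toE X) (toE Y) : ℂ) = (Xᴴ * Y).trace := by
  rw [toE, toE, EuclideanSpace.inner_toLp_toLp, dotProduct_comm]
  rw [Matrix.trace]
  rw [dotProduct]
  rw [Fintype.sum_prod_type]
  rw [Finset.sum_comm]
  refine Finset.sum_congr rfl fun i _ => ?_
  rw [Matrix.diag_apply, Matrix.mul_apply]
  refine Finset.sum_congr rfl fun j _ => ?_
  simp [Matrix.conjTranspose_apply]

lemma toE_norm_sq (X : Matrix n n ℂ) : (‖toE X‖ : ℝ) ^ 2 = ((Xᴴ * X).trace).re := by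
  rw [← toE_inner, ← inner_self_eq_norm_sq (𝕜 := ℂ)]
  rfl

lemma toE_inj {X Y : Matrix n n ℂ} (h : toE X = toE Y) : X = Y := by
  have := congrArg (WithLp.equiv 2 ((n × n) → ℂ)) h
  simp only [toE, Equiv.apply_symm_apply] at this
  ext i j
  exact congrFun this (i, j)


-- spectral lemmas
section Spec
variable {n : Type*} [Fintype n] [DecidableEq n]

lemma spec' {K : Matrix n n ℂ} (hK : K.IsHermitian) :
    K = (Matrix.IsHermitian.eigenvectorUnitary hK : Matrix n n ℂ) *
        Matrix.diagonal (fun i => (hK.eigenvalues i : ℂ)) *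
        star (Matrix.IsHermitian.eigenvectorUnitary hK : Matrix n n ℂ) := by
  have := hK.spectral_theorem
  rw [Unitary.conjStarAlgAut_apply] at this
  exact this

lemma herm_sq {K : Matrix n n ℂ} (hK : K.IsHermitian) :
    Kᴴ * K = (Matrix.IsHermitian.eigenvectorUnitary hK : Matrix n n ℂ) *
        Matrix.diagonal (fun i => ((hK.eigenvalues i)^2 : ℂ)) *
        star (Matrix.IsHermitian.eigenvectorUnitary hK : Matrix n n ℂ) := by
  rw [hK.eq]
  conv_lhs => rw [spec' hK]
  rw [unitary_conj_mul]
  congr 1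
  ext i
  push_cast
  ring

lemma matAbs_eq {K : Matrix n n ℂ} (hK : K.IsHermitian) :
    matAbs K = (Matrix.IsHermitian.eigenvectorUnitary hK : Matrix n n ℂ) *
        Matrix.diagonal (fun i => ((|hK.eigenvalues i| : ℝ) : ℂ)) *
        star (Matrix.IsHermitian.eigenvectorUnitary hK : Matrix n n ℂ) := by
  rw [matAbs]
  apply msqrt_eq_of_sq
  · exact unitary_conj_psd _ (fun i => abs_nonneg _)
  · exact Matrix.posSemidef_conjTranspose_mul_self K
  · rw [unitary_conj_mul, herm_sq hK]
    have : (fun i => ((|hK.eigenvalues i| : ℝ) : ℂ) * ((|hK.eigenvalues i| : ℝ) : ℂ))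
        = fun i => ((hK.eigenvalues i : ℝ) : ℂ) ^ 2 := by
      ext i
      rw [← Complex.ofReal_mul, abs_mul_abs_self]
      push_cast
      ring
    rw [this]

lemma matAbs_posSemidef (K : Matrix n n ℂ) : (matAbs K).PosSemidef :=
  msqrt_posSemidef (Matrix.posSemidef_conjTranspose_mul_self K)

lemma unitary_conj_sub (V : Matrix.unitaryGroup n ℂ) (d e : n → ℂ) :
    ((V : Matrix n n ℂ) * Matrix.diagonal d * star (V : Matrix n n ℂ)) -
      ((V : Matrix n n ℂ) * Matrix.diagonal e * star (V : Matrix n n ℂ))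
    = (V : Matrix n n ℂ) * Matrix.diagonal (fun i => d i - e i) * star (V : Matrix n n ℂ) := by
  rw [← Matrix.sub_mul, ← Matrix.mul_sub, ← Matrix.diagonal_sub]

lemma matAbs_sub_psd {K : Matrix n n ℂ} (hK : K.IsHermitian) :
    (matAbs K - K).PosSemidef := by
  nth_rewrite 2 [spec' hK]
  rw [matAbs_eq hK, unitary_conj_sub]
  have : (fun i => ((|hK.eigenvalues i| : ℝ) : ℂ) - (hK.eigenvalues i : ℂ))
      = fun i => ((|hK.eigenvalues i| - hK.eigenvalues i : ℝ) : ℂ) := by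
    ext i; push_cast; ring
  rw [this]
  exact unitary_conj_psd _ (fun i => by simp [sub_nonneg, le_abs_self])

lemma matAbs_trace_re {K : Matrix n n ℂ} (hK : K.IsHermitian) :
    (matAbs K).trace.re = ∑ i, |hK.eigenvalues i| := by
  rw [matAbs_eq hK, unitary_conj_trace, Matrix.trace_diagonal, Complex.re_sum]
  simp

lemma herm_trace_re {K : Matrix n n ℂ} (hK : K.IsHermitian) :
    K.trace.re = ∑ i, hK.eigenvalues i := by
  conv_lhs => rw [spec' hK]
  rw [unitary_conj_trace, Matrix.trace_diagonal, Complex.re_sum]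
  simp

lemma trace_re_le_traceNorm {K : Matrix n n ℂ} (hK : K.IsHermitian) :
    K.trace.re ≤ traceNorm K := by
  have h1 : traceNorm K = (matAbs K).trace.re := rfl
  rw [h1, matAbs_trace_re hK, herm_trace_re hK]
  exact Finset.sum_le_sum fun i _ => le_abs_self _

lemma matAbs_of_psd {K : Matrix n n ℂ} (h : K.PosSemidef) : matAbs K = K := by
  rw [matAbs]
  exact msqrt_eq_of_sq h (Matrix.posSemidef_conjTranspose_mul_self K)
    (by conv_rhs => rw [h.isHermitian.eq])

end Spec

section Master
variable {n : Type*} [Fintype n] [DecidableEq n]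

lemma master {ρ σ : Matrix n n ℂ} (hρ : ρ.PosSemidef) (hσ : σ.PosSemidef) :
    (msqrt (msqrt σ * ρ * msqrt σ)).trace.re
      ≤ Real.sqrt ρ.trace.re * Real.sqrt σ.trace.re ∧
    (ρ.trace = 1 → σ.trace = 1 →
      (msqrt (msqrt σ * ρ * msqrt σ)).trace.re = 1 → ρ = σ) := by
  have hsρ := msqrt_posSemidef hρ
  have hsσ := msqrt_posSemidef hσ
  set sρ := msqrt ρ with hsρdef
  set sσ := msqrt σ with hsσdef
  have hMN : (sρ * sσ)ᴴ * (sρ * sσ) = sσ * ρ * sσ := by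
    rw [Matrix.conjTranspose_mul, hsρ.isHermitian.eq, hsσ.isHermitian.eq]
    have h1 : sσ * sρ * (sρ * sσ) = sσ * ((sρ * sρ) * sσ) := by simp only [Matrix.mul_assoc]
    rw [h1, msqrt_mul_self hρ, ← Matrix.mul_assoc]
  have hN : (sσ * ρ * sσ).PosSemidef := hMN ▸ Matrix.posSemidef_conjTranspose_mul_self _
  set lam := hN.isHermitian.eigenvalues with hlamdef
  have hlam0 : ∀ i, 0 ≤ lam i := fun i => hN.eigenvalues_nonneg i
  set V := Matrix.IsHermitian.eigenvectorUnitary hN.isHermitian with hVdef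
  have hspec : sσ * ρ * sσ = (V : Matrix n n ℂ) * Matrix.diagonal (fun i => (lam i : ℂ)) *
      star (V : Matrix n n ℂ) := spec' hN.isHermitian
  have hVV : (V : Matrix n n ℂ) * star (V : Matrix n n ℂ) = 1 :=
    Matrix.mem_unitaryGroup_iff.mp V.2
  have sqrtN : msqrt (sσ * ρ * sσ)
      = (V : Matrix n n ℂ) * Matrix.diagonal (fun i => ((Real.sqrt (lam i) : ℝ) : ℂ)) *
        star (V : Matrix n n ℂ) := by
    apply msqrt_eq_of_sq (unitary_conj_psd _ (fun i => Real.sqrt_nonneg _)) hN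
    rw [unitary_conj_mul, hspec]
    have : (fun i => ((Real.sqrt (lam i) : ℝ) : ℂ) * ((Real.sqrt (lam i) : ℝ) : ℂ))
        = fun i => ((lam i : ℝ) : ℂ) := by
      ext i
      rw [← Complex.ofReal_mul, Real.mul_self_sqrt (hlam0 i)]
    rw [this]
  set t := ∑ i, Real.sqrt (lam i) with htdef
  have htrace : (msqrt (sσ * ρ * sσ)).trace.re = t := by
    rw [sqrtN, unitary_conj_trace, Matrix.trace_diagonal, Complex.re_sum]
    simp [htdef]
  set P := Matrix.diagonal (fun i => if lam i = 0 then (0:ℂ)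
      else ((Real.sqrt (lam i))⁻¹ : ℂ)) with hPdef
  set U := (sρ * sσ) * ((V : Matrix n n ℂ) * P) with hUdef
  set X := sρ * U with hXdef
  set Y := sσ * (V : Matrix n n ℂ) with hYdef
  have VNV : star (V : Matrix n n ℂ) * (sσ * ρ * sσ) * (V : Matrix n n ℂ)
      = Matrix.diagonal (fun i => (lam i : ℂ)) := by
    rw [hspec]
    exact unitary_conj_inv V _
  have hXY : Xᴴ * Y = star P * Matrix.diagonal (fun i => (lam i : ℂ)) := by
    rw [← VNV, hXdef, hYdef, hUdef, ← msqrt_mul_self hρ]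
    simp only [Matrix.conjTranspose_mul, Matrix.star_eq_conjTranspose, Matrix.mul_assoc,
      hsρ.isHermitian.eq, hsσ.isHermitian.eq, ← hsρdef]
  have htXY : (Xᴴ * Y).trace = (t : ℂ) := by
    rw [hXY, hPdef, Matrix.star_eq_conjTranspose, Matrix.diagonal_conjTranspose,
      Matrix.diagonal_mul_diagonal, Matrix.trace_diagonal, htdef]
    push_cast
    refine Finset.sum_congr rfl fun i _ => ?_
    by_cases h : lam i = 0
    · simp [h, Pi.star_apply]
    · have hpos : 0 < lam i := lt_of_le_of_ne (hlam0 i) (Ne.symm h)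
      have hsne : Real.sqrt (lam i) ≠ 0 := by
        rw [Real.sqrt_ne_zero' ]
        exact hpos
      simp only [Pi.star_apply, if_neg h, RCLike.star_def]
      rw [← Complex.ofReal_inv, Complex.conj_ofReal, ← Complex.ofReal_mul]
      congr 1
      obtain ⟨s, hs⟩ : ∃ s, Real.sqrt (lam i) = s := ⟨_, rfl⟩
      have hl : lam i = s * s := by rw [← hs]; exact (Real.mul_self_sqrt (hlam0 i)).symm
      rw [hs] at hsne ⊢
      rw [hl, inv_mul_cancel_left₀ hsne]
  have hUHU : Uᴴ * U = Matrix.diagonal (fun i => if lam i = 0 then (0:ℂ) else 1) := by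
    have e : Uᴴ * U = star P * (star (V : Matrix n n ℂ) * (sσ * ρ * sσ) * (V : Matrix n n ℂ)) * P := by
      rw [hUdef, ← msqrt_mul_self hρ]
      simp only [Matrix.conjTranspose_mul, Matrix.star_eq_conjTranspose, Matrix.mul_assoc,
        hsρ.isHermitian.eq, hsσ.isHermitian.eq, ← hsρdef]
    rw [e, VNV, hPdef, Matrix.star_eq_conjTranspose, Matrix.diagonal_conjTranspose,
      Matrix.diagonal_mul_diagonal, Matrix.diagonal_mul_diagonal]
    apply congrArg Matrix.diagonal
    funext i
    simp only [Pi.mul_apply, Pi.star_apply]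
    by_cases h : lam i = 0
    · simp [h]
    · have hpos : 0 < lam i := lt_of_le_of_ne (hlam0 i) (Ne.symm h)
      have hsne : Real.sqrt (lam i) ≠ 0 := by rw [Real.sqrt_ne_zero']; exact hpos
      simp only [if_neg h, RCLike.star_def]
      rw [← Complex.ofReal_inv, Complex.conj_ofReal, ← Complex.ofReal_mul, ← Complex.ofReal_mul]
      obtain ⟨s, hs⟩ : ∃ s, Real.sqrt (lam i) = s := ⟨_, rfl⟩
      have hl : lam i = s * s := by rw [← hs]; exact (Real.mul_self_sqrt (hlam0 i)).symm
      rw [hs] at hsne ⊢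
      rw [hl]
      rw [inv_mul_cancel_left₀ hsne, mul_inv_cancel₀ hsne]
      norm_num
  have h1U : (1 - Uᴴ * U).PosSemidef := by
    have hdd : (1 : Matrix n n ℂ) - Matrix.diagonal (fun i => if lam i = 0 then (0:ℂ) else 1)
        = Matrix.diagonal (fun i => if lam i = 0 then (1:ℂ) else 0) := by
      ext i j
      by_cases hij : i = j
      · subst hij
        by_cases h : lam i = 0 <;>
          simp [Matrix.sub_apply, Matrix.one_apply, Matrix.diagonal_apply, h]
      · simp [Matrix.sub_apply, Matrix.one_apply, Matrix.diagonal_apply, hij]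
    rw [hUHU, hdd]
    refine Matrix.PosSemidef.diagonal fun i => ?_
    by_cases h : lam i = 0 <;> simp [h]
  have hUU' : (1 - U * Uᴴ).PosSemidef := contraction h1U
  have hXX : Xᴴ * X = Uᴴ * (ρ * U) := by
    rw [hXdef, ← msqrt_mul_self hρ]
    simp only [Matrix.conjTranspose_mul, hsρ.isHermitian.eq, Matrix.mul_assoc, ← hsρdef]
  have hpsdZ : (sρ * (1 - U * Uᴴ) * sρ).PosSemidef := by
    have := hUU'.mul_mul_conjTranspose_same sρ
    rwa [hsρ.isHermitian.eq] at this
  have h5 : (Xᴴ * X).trace = (ρ * (U * Uᴴ)).trace := by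
    rw [hXX, Matrix.trace_mul_comm, Matrix.mul_assoc]
  have h6 : (sρ * (1 - U * Uᴴ) * sρ).trace = ρ.trace - (Xᴴ * X).trace := by
    rw [Matrix.trace_mul_cycle, msqrt_mul_self hρ, Matrix.mul_sub, Matrix.mul_one,
      Matrix.trace_sub, h5]
  have hXtr : (Xᴴ * X).trace.re ≤ ρ.trace.re := by
    have hnn := psd_trace_re_nonneg hpsdZ
    rw [h6] at hnn
    rw [Complex.sub_re] at hnn
    linarith
  have hYY' : Yᴴ * Y = star (V : Matrix n n ℂ) * σ * (V : Matrix n n ℂ) := by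
    rw [hYdef, ← msqrt_mul_self hσ]
    simp only [Matrix.conjTranspose_mul, Matrix.star_eq_conjTranspose, Matrix.mul_assoc,
      hsσ.isHermitian.eq, ← hsσdef]
  have hYn : ‖toE Y‖ ^ 2 = σ.trace.re := by
    rw [toE_norm_sq, hYY', Matrix.trace_mul_cycle, hVV, Matrix.one_mul]
  have hXn : ‖toE X‖ ^ 2 = (Xᴴ * X).trace.re := toE_norm_sq X
  have hinner : (inner ℂ (toE X) (toE Y) : ℂ) = (t : ℂ) := by rw [toE_inner, htXY]
  have hX1 : ‖toE X‖ ≤ Real.sqrt ρ.trace.re := by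
    have e1 : ‖toE X‖ = Real.sqrt ((Xᴴ * X).trace.re) := by
      rw [← hXn, Real.sqrt_sq (norm_nonneg _)]
    rw [e1]
    exact Real.sqrt_le_sqrt hXtr
  have hY1 : ‖toE Y‖ = Real.sqrt σ.trace.re := by
    rw [← hYn, Real.sqrt_sq (norm_nonneg _)]
  have ht_le : t ≤ ‖toE X‖ * ‖toE Y‖ := by
    have h2 : t ≤ ‖(inner ℂ (toE X) (toE Y) : ℂ)‖ := by
      rw [hinner, Complex.norm_real, Real.norm_eq_abs]
      exact le_abs_self t
    exact h2.trans (norm_inner_le_norm _ _)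
  constructor
  · rw [htrace]
    calc t ≤ ‖toE X‖ * ‖toE Y‖ := ht_le
      _ ≤ Real.sqrt ρ.trace.re * Real.sqrt σ.trace.re := by
          rw [hY1]
          exact mul_le_mul_of_nonneg_right hX1 (Real.sqrt_nonneg _)
  · intro hρ1 hσ1 hteq
    rw [htrace] at hteq
    have hρre : ρ.trace.re = 1 := by rw [hρ1]; simp
    have hσre : σ.trace.re = 1 := by rw [hσ1]; simp
    have hbn : ‖toE Y‖ = 1 := by rw [hY1, hσre, Real.sqrt_one]
    have han : ‖toE X‖ = 1 := by
      have hle : ‖toE X‖ ≤ 1 := by rw [← Real.sqrt_one, ← hρre]; exact hX1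
      have hge : 1 ≤ ‖toE X‖ := by
        have := ht_le
        rw [hteq, hbn, mul_one] at this
        exact this
      linarith
    have hinner1 : (inner ℂ (toE X) (toE Y) : ℂ) = 1 := by
      rw [hinner, hteq, Complex.ofReal_one]
    have hXeqY : X = Y := toE_inj ((inner_eq_one_iff_of_norm_eq_one han hbn).mp hinner1)
    have hYYH : Y * Yᴴ = σ := by
      rw [hYdef, Matrix.conjTranspose_mul, hsσ.isHermitian.eq, ← Matrix.star_eq_conjTranspose]
      calc sσ * (V : Matrix n n ℂ) * (star (V : Matrix n n ℂ) * sσ)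
          = sσ * ((V : Matrix n n ℂ) * star (V : Matrix n n ℂ)) * sσ := by
            simp only [Matrix.mul_assoc]
        _ = σ := by rw [hVV, Matrix.mul_one, msqrt_mul_self hσ]
    have hXXH : X * Xᴴ = sρ * (U * Uᴴ) * sρ := by
      rw [hXdef, Matrix.conjTranspose_mul, hsρ.isHermitian.eq]
      simp only [Matrix.mul_assoc]
    have hsub : sρ * (1 - U * Uᴴ) * sρ = ρ - σ := by
      have hss : sρ * (U * Uᴴ) * sρ = σ := by rw [← hXXH, hXeqY, hYYH]
      rw [Matrix.mul_sub, Matrix.mul_one, Matrix.sub_mul, msqrt_mul_self hρ, hss]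
    have hZ0 : sρ * (1 - U * Uᴴ) * sρ = 0 := by
      apply psd_eq_zero_of_trace hpsdZ
      rw [hsub, Matrix.trace_sub, hρ1, hσ1, sub_self]
      simp
    rw [hsub] at hZ0
    exact sub_eq_zero.mp hZ0

end Master

end PPTAux

/-- The set `PPT₂(A:B)`: positive semidefinite `σ` such that there exists `ω` with
`−ω ⪯ σ^{T_B} ⪯ ω` and `‖ω^{T_B}‖₁ ≤ 1`. -/
def PPT2set {A B : Type*} [Fintype A] [Fintype B] [DecidableEq A] [DecidableEq B] :
    Set (Matrix (A × B) (A × B) ℂ) :=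
  {σ | σ.PosSemidef ∧ ∃ ω : Matrix (A × B) (A × B) ℂ,
    (ω - ptB σ).PosSemidef ∧ (ω + ptB σ).PosSemidef ∧ traceNorm (ptB ω) ≤ 1}

/-- The set `PPT#₂(A:B)`: positive semidefinite `σ` such that there exists `ω` with
`|σ^{T_B}| ⪯ ω` and `‖ω^{T_B}‖₁ ≤ 1`. -/
def PPThash2set {A B : Type*} [Fintype A] [Fintype B] [DecidableEq A] [DecidableEq B] :
    Set (Matrix (A × B) (A × B) ℂ) :=
  {σ | σ.PosSemidef ∧ ∃ ω : Matrix (A × B) (A × B) ℂ,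
    (ω - matAbs (ptB σ)).PosSemidef ∧ traceNorm (ptB ω) ≤ 1}

theorem fidelity_PPThash2_le_one_and_eq_one_iff_ppt {A B : Type*}
    [Fintype A] [Fintype B] [DecidableEq A] [DecidableEq B]
    (ρ : Matrix (A × B) (A × B) ℂ) (hρ : ρ.PosSemidef) (htr : ρ.trace = 1) :
    (∀ σ ∈ PPThash2set (A := A) (B := B), fidelity ρ σ ≤ 1) ∧
      ((∃ σ ∈ PPThash2set (A := A) (B := B), fidelity ρ σ = 1) ↔ (ptB ρ).PosSemidef) := by
  have hρre : ρ.trace.re = 1 := by rw [htr]; simp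
  -- trace bound for members of the set
  have stepA : ∀ σ ∈ PPThash2set (A := A) (B := B), σ.trace.re ≤ 1 := by
    rintro σ ⟨hσ, ω, h1, h2⟩
    have hKH : (ptB σ).IsHermitian := PPTAux.ptB_isHermitian hσ.isHermitian
    have hAbs : (matAbs (ptB σ)).PosSemidef := PPTAux.matAbs_posSemidef _
    have hω : ω.PosSemidef := by
      have := h1.add hAbs
      rwa [sub_add_cancel] at this
    have c1 : σ.trace.re = (ptB σ).trace.re := by rw [PPTAux.ptB_trace]
    have c2 : (ptB σ).trace.re ≤ (matAbs (ptB σ)).trace.re := by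
      have h0 := PPTAux.psd_trace_re_nonneg (PPTAux.matAbs_sub_psd hKH)
      rw [Matrix.trace_sub, Complex.sub_re] at h0
      linarith
    have c3 : (matAbs (ptB σ)).trace.re ≤ ω.trace.re := by
      have h0 := PPTAux.psd_trace_re_nonneg h1
      rw [Matrix.trace_sub, Complex.sub_re] at h0
      linarith
    have c4 : ω.trace.re = (ptB ω).trace.re := by rw [PPTAux.ptB_trace]
    have c5 : (ptB ω).trace.re ≤ traceNorm (ptB ω) :=
      PPTAux.trace_re_le_traceNorm (PPTAux.ptB_isHermitian hω.isHermitian)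
    linarith
  -- nonnegativity of the fidelity core trace
  have ht0 : ∀ (σ : Matrix (A × B) (A × B) ℂ), σ.PosSemidef →
      0 ≤ (msqrt (msqrt σ * ρ * msqrt σ)).trace.re := by
    intro σ hσ
    apply PPTAux.psd_trace_re_nonneg
    apply PPTAux.msqrt_posSemidef
    have := hρ.mul_mul_conjTranspose_same (msqrt σ)
    rwa [(PPTAux.msqrt_posSemidef hσ).isHermitian.eq] at this
  have part1 : ∀ σ ∈ PPThash2set (A := A) (B := B), fidelity ρ σ ≤ 1 := by
    intro σ hmem
    have hσ := hmem.1
    have hm := (PPTAux.master hρ hσ).1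
    have hσre := stepA σ hmem
    have hb : (msqrt (msqrt σ * ρ * msqrt σ)).trace.re ≤ 1 := by
      calc _ ≤ Real.sqrt ρ.trace.re * Real.sqrt σ.trace.re := hm
        _ ≤ 1 := by
            rw [hρre, Real.sqrt_one, one_mul]
            exact Real.sqrt_le_one.mpr hσre
    have h0 := ht0 σ hσ
    rw [fidelity]
    nlinarith
  refine ⟨part1, ?_, ?_⟩
  · rintro ⟨σ, hmem, hfid⟩
    obtain ⟨hσ, ω, h1, h2⟩ := hmem
    have h0 := ht0 σ hσ
    have ht1 : (msqrt (msqrt σ * ρ * msqrt σ)).trace.re = 1 := by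
      rw [fidelity] at hfid
      nlinarith
    have hm := (PPTAux.master hρ hσ).1
    have hσ0 : 0 ≤ σ.trace.re := PPTAux.psd_trace_re_nonneg hσ
    have hσ_ge : (1:ℝ) ≤ σ.trace.re := by
      rw [ht1, hρre, Real.sqrt_one, one_mul] at hm
      nlinarith [Real.sq_sqrt hσ0, Real.sqrt_nonneg σ.trace.re]
    have hσre1 : σ.trace.re = 1 :=
      le_antisymm (stepA σ ⟨hσ, ω, h1, h2⟩) hσ_ge
    have hσ1 : σ.trace = 1 := by
      rw [PPTAux.herm_trace_eq_re hσ.isHermitian, hσre1]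
      norm_num
    have hρσ : ρ = σ := (PPTAux.master hρ hσ).2 htr hσ1 ht1
    rw [← hρσ] at h1
    -- now ρ itself is in the set; conclude PPT
    have hKH : (ptB ρ).IsHermitian := PPTAux.ptB_isHermitian hρ.isHermitian
    have hAbs : (matAbs (ptB ρ)).PosSemidef := PPTAux.matAbs_posSemidef _
    have hω : ω.PosSemidef := by
      have := h1.add hAbs
      rwa [sub_add_cancel] at this
    have c3 : (matAbs (ptB ρ)).trace.re ≤ ω.trace.re := by
      have h0' := PPTAux.psd_trace_re_nonneg h1
      rw [Matrix.trace_sub, Complex.sub_re] at h0'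
      linarith
    have c4 : ω.trace.re = (ptB ω).trace.re := by rw [PPTAux.ptB_trace]
    have c5 : (ptB ω).trace.re ≤ traceNorm (ptB ω) :=
      PPTAux.trace_re_le_traceNorm (PPTAux.ptB_isHermitian hω.isHermitian)
    have habs_le : (matAbs (ptB ρ)).trace.re ≤ 1 := by linarith
    have hKtr : (ptB ρ).trace.re = 1 := by rw [PPTAux.ptB_trace]; exact hρre
    have hdiffpsd := PPTAux.matAbs_sub_psd hKH
    have hdiff0 : (matAbs (ptB ρ) - ptB ρ).trace.re = 0 := by
      have hnn := PPTAux.psd_trace_re_nonneg hdiffpsd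
      rw [Matrix.trace_sub, Complex.sub_re] at hnn ⊢
      linarith
    have hzero := PPTAux.psd_eq_zero_of_trace hdiffpsd hdiff0
    have heq : matAbs (ptB ρ) = ptB ρ := sub_eq_zero.mp hzero
    rw [← heq]
    exact PPTAux.matAbs_posSemidef _
  · intro hpt
    refine ⟨ρ, ⟨hρ, ptB ρ, ?_, ?_⟩, ?_⟩
    · rw [PPTAux.matAbs_of_psd hpt, sub_self]
      exact Matrix.PosSemidef.zero
    · show traceNorm (ptB (ptB ρ)) ≤ 1
      rw [PPTAux.ptB_ptB]
      have e : traceNorm ρ = (matAbs ρ).trace.re := rfl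
      rw [e, PPTAux.matAbs_of_psd hρ, hρre]
    · rw [fidelity]
      obtain ⟨s, hs, hss⟩ : ∃ s : Matrix (A × B) (A × B) ℂ, s = msqrt ρ ∧ s * s = ρ :=
        ⟨msqrt ρ, rfl, PPTAux.msqrt_mul_self hρ⟩
      rw [← hs, ← hss]
      have e2 : s * (s * s) * s = (s * s) * (s * s) := by simp only [Matrix.mul_assoc]
      rw [e2, hss]
      have e3 : msqrt (ρ * ρ) = ρ :=
        PPTAux.msqrt_eq_of_sq hρ (by rw [← pow_two]; exact hρ.pow 2) rfl
      rw [e3, hρre]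
      norm_num
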